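/- For every rewrite rule T = (L, R, τ, σ) and every matching m : L → G with respect to T, a cloning pushout of T and m exists, i.e. the category of cloning cones over T and m has an initial object. -/

import Mathlib

/-!
Termgraphs over a signature `Ω` with arity function `ar`.
A termgraph has a type of nodes `N`; a node `n` is *labeled* when `label n = some ω`,
and then its successor string `succ n` has length `ar ω`; unlabeled nodes have an
empty successor string (the successor function is only meaningful on labeled nodes).
-/

universe u

structure TermGraph (Ω : Type u) (ar : Ω → ℕ) : Type (u + 1) where
  N : Type u
  label : N → Option Ω
  succ : N → List N
  arity_eq : ∀ n : N, (succ n).length = ((label n).map ar).getD 0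

namespace TermGraph

variable {Ω : Type u} {ar : Ω → ℕ}

/-- A graph morphism: preserves labeled nodes, labels and successors. -/
structure Hom (G H : TermGraph Ω ar) : Type u where
  toFun : G.N → H.N
  label_eq : ∀ (n : G.N) (ω : Ω), G.label n = some ω → H.label (toFun n) = some ω
  succ_eq : ∀ (n : G.N) (ω : Ω), G.label n = some ω →
    H.succ (toFun n) = (G.succ n).map toFun

/-- `γ` is graphic at `n`: either `n` is unlabeled, or both `n` and `γ n` are labeled
with the same label and corresponding successors. -/
def GraphicAt (G H : TermGraph Ω ar) (γ : G.N → H.N) (n : G.N) : Prop :=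
  ∀ ω : Ω, G.label n = some ω →
    H.label (γ n) = some ω ∧ H.succ (γ n) = (G.succ n).map γ

/-- `γ` is strictly graphic at `n`: either both `n` and `γ n` are unlabeled, or both
are labeled with the same label and corresponding successors.  (When both are
unlabeled both successor strings are empty, so the successor condition is harmless.) -/
def StrictGraphicAt (G H : TermGraph Ω ar) (γ : G.N → H.N) (n : G.N) : Prop :=
  H.label (γ n) = G.label n ∧ H.succ (γ n) = (G.succ n).map γ

def GraphicOn (G H : TermGraph Ω ar) (γ : G.N → H.N) (Γ : Set G.N) : Prop :=
  ∀ n ∈ Γ, GraphicAt G H γ n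

def StrictGraphicOn (G H : TermGraph Ω ar) (γ : G.N → H.N) (Γ : Set G.N) : Prop :=
  ∀ n ∈ Γ, StrictGraphicAt G H γ n

/-- `p ∈ |H|` is a `τ`-clone of `q ∈ |G|` (for `τ : |G| → |H|`): `p` is labeled iff
`q` is labeled, and then they carry the same label and `𝓢_H p = τ*(𝓢_G q)`. -/
def IsClone (G H : TermGraph Ω ar) (τ : G.N → H.N) (p : H.N) (q : G.N) : Prop :=
  H.label p = G.label q ∧ H.succ p = (G.succ q).map τ

end TermGraph

open TermGraph

/-- `(P, τ₁, δ)` is a pushout of `τ : L → R` and `m : L → G` in the category of sets: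
the square commutes and it satisfies the universal property of pushouts. -/
def IsSetPushout {L R G P : Type u} (τ : L → R) (m : L → G)
    (τ₁ : G → P) (δ : R → P) : Prop :=
  τ₁ ∘ m = δ ∘ τ ∧
  ∀ (P' : Type u) (τ₁' : G → P') (δ' : R → P'), τ₁' ∘ m = δ' ∘ τ →
    ∃! η : P → P', η ∘ τ₁ = τ₁' ∧ η ∘ δ = δ'

/-- A rewrite rule `(L, R, τ, σ)`: `τ : |L| → |R|` is a total function and
`σ : |R| ⇀ |L|` is a partial function (encoded via `Option`) such that each node
in the domain of `σ` is unlabeled or is a `τ`-clone of its `σ`-image. -/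
structure Rule (Ω : Type u) (ar : Ω → ℕ) : Type (u + 1) where
  L : TermGraph Ω ar
  R : TermGraph Ω ar
  τ : L.N → R.N
  σ : R.N → Option L.N
  σ_cond : ∀ (n : R.N) (q : L.N), σ n = some q →
    R.label n = none ∨ IsClone L R τ n q

/-- A matching with respect to a rewrite rule `T`: a graph morphism `m : L → G` such
that whenever `m p = m p'` for distinct nodes `p, p'` of `L`, then `τ p` and `τ p'`
are in the domain of `σ` and `σ (τ p) = σ (τ p')`. -/
def IsMatching {Ω : Type u} {ar : Ω → ℕ} (T : Rule Ω ar) (G : TermGraph Ω ar)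
    (m : TermGraph.Hom T.L G) : Prop :=
  ∀ p p' : T.L.N, p ≠ p' → m.toFun p = m.toFun p' →
    (T.σ (T.τ p)).isSome ∧ (T.σ (T.τ p')).isSome ∧ T.σ (T.τ p) = T.σ (T.τ p')

/-- `(H, τ₁, d, σ₁)` is a cloning cone over the rewrite rule `T` and `m : L → G`:
`(G, H, τ₁, σ₁)` is a rewrite rule, `(m, d)` is a morphism of rewrite rules from `T`
to it, `τ₁` is graphic on `|G| − |m(L)|`, and every node in the domain of `σ₁` is a
`τ₁`-clone of its `σ₁`-image. -/
def IsCloningCone {Ω : Type u} {ar : Ω → ℕ} (T : Rule Ω ar) (G : TermGraph Ω ar)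
    (m : TermGraph.Hom T.L G) (H : TermGraph Ω ar) (τ₁ : G.N → H.N)
    (d : TermGraph.Hom T.R H) (σ₁ : H.N → Option G.N) : Prop :=
  d.toFun ∘ T.τ = τ₁ ∘ m.toFun ∧
  (∀ n : T.R.N, (T.σ n).isSome → (σ₁ (d.toFun n)).isSome) ∧
  (∀ (n : T.R.N) (q : T.L.N), T.σ n = some q → σ₁ (d.toFun n) = some (m.toFun q)) ∧
  GraphicOn G H τ₁ ((Set.range m.toFun)ᶜ) ∧
  (∀ (x : H.N) (q : G.N), σ₁ x = some q → IsClone G H τ₁ x q)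

/-- `h` is a morphism of cloning cones from `(H, τ₁, d, σ₁)` to `(H', τ₁', d', σ₁')`:
`|h| ∘ τ₁ = τ₁'`, `h ∘ d = d'`, `h(dom σ₁) ⊆ dom σ₁'` and `σ₁' ∘ |h| = σ₁` on `dom σ₁`. -/
def IsCloningConeMorphism {Ω : Type u} {ar : Ω → ℕ} {G H H' : TermGraph Ω ar}
    {R : TermGraph Ω ar}
    (τ₁ : G.N → H.N) (d : TermGraph.Hom R H) (σ₁ : H.N → Option G.N)
    (τ₁' : G.N → H'.N) (d' : TermGraph.Hom R H') (σ₁' : H'.N → Option G.N)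
    (h : TermGraph.Hom H H') : Prop :=
  h.toFun ∘ τ₁ = τ₁' ∧ h.toFun ∘ d.toFun = d'.toFun ∧
  (∀ x : H.N, (σ₁ x).isSome → (σ₁' (h.toFun x)).isSome) ∧
  (∀ x : H.N, (σ₁ x).isSome → σ₁' (h.toFun x) = σ₁ x)

section Construction

variable {Ω : Type u} {ar : Ω → ℕ} (T : Rule Ω ar) (G : TermGraph Ω ar)
  (m : TermGraph.Hom T.L G)

/-- Generating relation for the pushout of `τ` and `m` in `Set`. -/
def rel0 : (G.N ⊕ T.R.N) → (G.N ⊕ T.R.N) → Prop :=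
  fun x y => ∃ p : T.L.N, x = Sum.inl (m.toFun p) ∧ y = Sum.inr (T.τ p)

def labR : T.R.N → Option Ω :=
  fun r => (T.σ r).elim (T.R.label r) (fun q => G.label (m.toFun q))

def sccR : T.R.N → List (G.N ⊕ T.R.N) :=
  fun r => (T.σ r).elim ((T.R.succ r).map Sum.inr)
    (fun q => (G.succ (m.toFun q)).map Sum.inl)

def sigR : T.R.N → Option G.N := fun r => (T.σ r).map m.toFun

lemma key_stable (hm : IsMatching T G m) {p p' : T.L.N}
    (h : m.toFun p = m.toFun p') :
    T.τ p = T.τ p' ∨ ∃ q, T.σ (T.τ p) = some q ∧ T.σ (T.τ p') = some q := by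
  by_cases hpp : p = p'
  · exact Or.inl (by rw [hpp])
  · obtain ⟨h1, _, h3⟩ := hm p p' hpp h
    obtain ⟨q, hq⟩ := Option.isSome_iff_exists.mp h1
    exact Or.inr ⟨q, hq, h3 ▸ hq⟩

lemma labR_stable (hm : IsMatching T G m) {p p' : T.L.N}
    (h : m.toFun p = m.toFun p') : labR T G m (T.τ p) = labR T G m (T.τ p') := by
  rcases key_stable T G m hm h with h | ⟨q, h1, h2⟩
  · rw [h]
  · simp [labR, h1, h2]

lemma sccR_stable (hm : IsMatching T G m) {p p' : T.L.N}
    (h : m.toFun p = m.toFun p') : sccR T G m (T.τ p) = sccR T G m (T.τ p') := by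
  rcases key_stable T G m hm h with h | ⟨q, h1, h2⟩
  · rw [h]
  · simp [sccR, h1, h2]

lemma sigR_stable (hm : IsMatching T G m) {p p' : T.L.N}
    (h : m.toFun p = m.toFun p') : sigR T G m (T.τ p) = sigR T G m (T.τ p') := by
  rcases key_stable T G m hm h with h | ⟨q, h1, h2⟩
  · rw [h]
  · simp [sigR, h1, h2]

open Classical in
noncomputable def labS : (G.N ⊕ T.R.N) → Option Ω
  | .inl g => if h : ∃ p, m.toFun p = g then labR T G m (T.τ h.choose) else G.label g
  | .inr r => labR T G m r

open Classical in
noncomputable def sccS : (G.N ⊕ T.R.N) → List (G.N ⊕ T.R.N)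
  | .inl g => if h : ∃ p, m.toFun p = g then sccR T G m (T.τ h.choose)
      else (G.succ g).map Sum.inl
  | .inr r => sccR T G m r

open Classical in
noncomputable def sigS : (G.N ⊕ T.R.N) → Option G.N
  | .inl g => if h : ∃ p, m.toFun p = g then sigR T G m (T.τ h.choose) else none
  | .inr r => sigR T G m r

lemma labS_rel (hm : IsMatching T G m) :
    ∀ x y, rel0 T G m x y → labS T G m x = labS T G m y := by
  rintro _ _ ⟨p, rfl, rfl⟩
  have h : ∃ p', m.toFun p' = m.toFun p := ⟨p, rfl⟩
  simp only [labS, dif_pos h]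
  exact labR_stable T G m hm h.choose_spec

lemma sccS_rel (hm : IsMatching T G m) :
    ∀ x y, rel0 T G m x y → sccS T G m x = sccS T G m y := by
  rintro _ _ ⟨p, rfl, rfl⟩
  have h : ∃ p', m.toFun p' = m.toFun p := ⟨p, rfl⟩
  simp only [sccS, dif_pos h]
  exact sccR_stable T G m hm h.choose_spec

lemma sigS_rel (hm : IsMatching T G m) :
    ∀ x y, rel0 T G m x y → sigS T G m x = sigS T G m y := by
  rintro _ _ ⟨p, rfl, rfl⟩
  have h : ∃ p', m.toFun p' = m.toFun p := ⟨p, rfl⟩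
  simp only [sigS, dif_pos h]
  exact sigR_stable T G m hm h.choose_spec

lemma sccR_len (r : T.R.N) :
    (sccR T G m r).length = ((labR T G m r).map ar).getD 0 := by
  cases h : T.σ r with
  | none => simp [sccR, labR, h, T.R.arity_eq r]
  | some q => simp [sccR, labR, h, G.arity_eq (m.toFun q)]

/-- The node set of the cloning pushout. -/
noncomputable def HG (hm : IsMatching T G m) : TermGraph Ω ar where
  N := Quot (rel0 T G m)
  label := Quot.lift (labS T G m) (labS_rel T G m hm)
  succ := fun x =>
    (Quot.lift (sccS T G m) (sccS_rel T G m hm) x).map (Quot.mk (rel0 T G m))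
  arity_eq := by
    refine Quot.ind ?_
    intro y
    show ((sccS T G m y).map _).length = ((labS T G m y).map ar).getD 0
    rw [List.length_map]
    cases y with
    | inl g =>
      by_cases h : ∃ p, m.toFun p = g
      · simp only [sccS, labS, dif_pos h]
        exact sccR_len T G m _
      · simp only [sccS, labS, dif_neg h]
        simp [G.arity_eq g]
    | inr r => exact sccR_len T G m r

lemma homExt {A B : TermGraph Ω ar} {f g : TermGraph.Hom A B}
    (h : f.toFun = g.toFun) : f = g := by
  cases f; cases g; cases h; rfl

end Construction

/-- For every rewrite rule `T = (L, R, τ, σ)` and every matching `m : L → G` with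
respect to `T`, a cloning pushout of `T` and `m` exists: the category of cloning
cones over `T` and `m` has an initial object. -/
theorem cloning_pushout_exists {Ω : Type u} {ar : Ω → ℕ} (T : Rule Ω ar)
    (G : TermGraph Ω ar) (m : TermGraph.Hom T.L G) (hm : IsMatching T G m) :
    ∃ (H : TermGraph Ω ar) (τ₁ : G.N → H.N) (d : TermGraph.Hom T.R H)
      (σ₁ : H.N → Option G.N),
      IsCloningCone T G m H τ₁ d σ₁ ∧
      ∀ (H' : TermGraph Ω ar) (τ₁' : G.N → H'.N) (d' : TermGraph.Hom T.R H')
        (σ₁' : H'.N → Option G.N), IsCloningCone T G m H' τ₁' d' σ₁' →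
        ∃! h : TermGraph.Hom H H',
          IsCloningConeMorphism τ₁ d σ₁ τ₁' d' σ₁' h := by
  classical
  have key : ∀ p : T.L.N, Quot.mk (rel0 T G m) (Sum.inl (m.toFun p)) =
      Quot.mk (rel0 T G m) (Sum.inr (T.τ p)) := fun p => Quot.sound ⟨p, rfl, rfl⟩
  refine ⟨HG T G m hm, fun g => Quot.mk (rel0 T G m) (Sum.inl g),
    ⟨fun r => Quot.mk (rel0 T G m) (Sum.inr r), ?_, ?_⟩,
    Quot.lift (sigS T G m) (sigS_rel T G m hm), ⟨?_, ?_, ?_, ?_, ?_⟩, ?_⟩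
  · -- d is a morphism: labels
    intro r ω hω
    show labS T G m (Sum.inr r) = some ω
    simp only [labS]
    cases hσ : T.σ r with
    | none => simpa [labR, hσ] using hω
    | some q =>
      rcases T.σ_cond r q hσ with hnone | hclone
      · rw [hω] at hnone; cases hnone
      · have hLq : T.L.label q = some ω := hclone.1.symm.trans hω
        simp [labR, hσ, m.label_eq q ω hLq]
  · -- d is a morphism: successors
    intro r ω hω
    show (sccS T G m (Sum.inr r)).map (Quot.mk (rel0 T G m)) = _
    simp only [sccS]
    cases hσ : T.σ r with
    | none => simp [sccR, hσ, List.map_map, Function.comp_def]; rfl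
    | some q =>
      rcases T.σ_cond r q hσ with hnone | hclone
      · rw [hω] at hnone; cases hnone
      · have hLq : T.L.label q = some ω := hclone.1.symm.trans hω
        have h1 : G.succ (m.toFun q) = (T.L.succ q).map m.toFun := m.succ_eq q ω hLq
        have h2 : T.R.succ r = (T.L.succ q).map T.τ := hclone.2
        simp [sccR, hσ, h1, h2, List.map_map, Function.comp_def, key]
        exact (List.map_map (f := T.τ) (l := T.L.succ q)
          (g := (fun r => Quot.mk (rel0 T G m) (Sum.inr r) : T.R.N → Quot (rel0 T G m)))).symm
  · -- square commutes
    funext p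
    exact (key p).symm
  · -- dom σ preserved (isSome)
    intro n hn
    show (sigS T G m (Sum.inr n)).isSome
    simpa [sigS, sigR] using hn
  · -- σ₁ ∘ d = m ∘ σ
    intro n q hq
    show sigS T G m (Sum.inr n) = some (m.toFun q)
    simp [sigS, sigR, hq]
  · -- graphic outside the image of m
    intro g hg ω hω
    have h : ¬∃ p, m.toFun p = g := by simpa [Set.mem_compl_iff, Set.mem_range] using hg
    constructor
    · show labS T G m (Sum.inl g) = some ω
      simp [labS, dif_neg h, hω]
    · show (sccS T G m (Sum.inl g)).map (Quot.mk (rel0 T G m)) = _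
      simp [sccS, dif_neg h, List.map_map, Function.comp_def]; rfl
  · -- clone condition for σ₁
    have cloneR : ∀ (r : T.R.N) (q : G.N), sigR T G m r = some q →
        labR T G m r = G.label q ∧
        (sccR T G m r).map (Quot.mk (rel0 T G m)) =
          (G.succ q).map (fun g => Quot.mk (rel0 T G m) (Sum.inl g)) := by
      intro r q hq
      obtain ⟨q0, hσ, rfl⟩ := Option.map_eq_some_iff.mp hq
      constructor
      · simp [labR, hσ]
      · simp [sccR, hσ, List.map_map, Function.comp_def]
    intro x
    induction x using Quot.ind with
    | _ y =>
      cases y with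
      | inl g =>
        by_cases h : ∃ p, m.toFun p = g
        · intro q hq
          have hq' : sigR T G m (T.τ h.choose) = some q := by
            simpa [sigS, dif_pos h] using hq
          have hcr := cloneR _ q hq'
          constructor
          · show labS T G m (Sum.inl g) = G.label q
            simpa [labS, dif_pos h] using hcr.1
          · show (sccS T G m (Sum.inl g)).map (Quot.mk (rel0 T G m)) = _
            simp only [sccS, dif_pos h]
            exact hcr.2
        · intro q hq
          have hq' : sigS T G m (Sum.inl g) = some q := hq
          simp [sigS, dif_neg h] at hq'
      | inr r =>
        intro q hq
        have hq' : sigR T G m r = some q := hq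
        have hcr := cloneR r q hq'
        exact ⟨hcr.1, hcr.2⟩
  · -- universal property
    intro H' τ₁' d' σ₁' hc
    obtain ⟨hc1, hc2, hc3, hc5, hc4, hc6⟩ :
        d'.toFun ∘ T.τ = τ₁' ∘ m.toFun ∧
        (∀ n : T.R.N, (T.σ n).isSome → (σ₁' (d'.toFun n)).isSome) ∧
        (∀ (n : T.R.N) (q : T.L.N), T.σ n = some q → σ₁' (d'.toFun n) = some (m.toFun q)) ∧
        GraphicOn G H' τ₁' ((Set.range m.toFun)ᶜ) ∧
        (∀ (x : H'.N) (q : G.N), σ₁' x = some q → IsClone G H' τ₁' x q) ∧ True :=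
      ⟨hc.1, hc.2.1, hc.2.2.1, hc.2.2.2.1, hc.2.2.2.2, trivial⟩
    have hfun_resp : ∀ x y, rel0 T G m x y →
        Sum.elim τ₁' d'.toFun x = Sum.elim τ₁' d'.toFun y := by
      rintro _ _ ⟨p, rfl, rfl⟩
      exact (congrFun hc1 p).symm
    let hfun : Quot (rel0 T G m) → H'.N := Quot.lift (Sum.elim τ₁' d'.toFun) hfun_resp
    have corekeyL : ∀ (r : T.R.N) (ω : Ω), labR T G m r = some ω →
        H'.label (d'.toFun r) = some ω ∧
        H'.succ (d'.toFun r) = (sccR T G m r).map (Sum.elim τ₁' d'.toFun) := by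
      intro r ω hω
      cases hσ : T.σ r with
      | none =>
        simp only [labR, hσ, Option.elim] at hω
        refine ⟨d'.label_eq r ω hω, ?_⟩
        rw [d'.succ_eq r ω hω]
        simp [sccR, hσ, List.map_map, Function.comp_def]
      | some q0 =>
        have hs := hc3 r q0 hσ
        have hcl := hc4 _ _ hs
        simp only [labR, hσ, Option.elim] at hω
        refine ⟨hcl.1.trans hω, ?_⟩
        rw [hcl.2]
        simp [sccR, hσ, List.map_map, Function.comp_def]
    have corekeyS : ∀ (r : T.R.N) (q : G.N), sigR T G m r = some q →
        σ₁' (d'.toFun r) = some q := by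
      intro r q hq
      obtain ⟨q0, hσ, rfl⟩ := Option.map_eq_some_iff.mp hq
      exact hc3 r q0 hσ
    have hchoose : ∀ (g : G.N) (h : ∃ p, m.toFun p = g),
        τ₁' g = d'.toFun (T.τ h.choose) := by
      intro g h
      conv_lhs => rw [← h.choose_spec]
      exact (congrFun hc1 h.choose).symm
    have hlab : ∀ (y : G.N ⊕ T.R.N) (ω : Ω), labS T G m y = some ω →
        H'.label (Sum.elim τ₁' d'.toFun y) = some ω ∧
        H'.succ (Sum.elim τ₁' d'.toFun y) = (sccS T G m y).map (Sum.elim τ₁' d'.toFun) := by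
      intro y ω hω
      cases y with
      | inr r =>
        simp only [labS] at hω
        simpa only [sccS, Sum.elim_inr] using corekeyL r ω hω
      | inl g =>
        by_cases h : ∃ p, m.toFun p = g
        · simp only [labS, dif_pos h] at hω
          simp only [Sum.elim_inl, sccS, dif_pos h, hchoose g h]
          exact corekeyL _ ω hω
        · simp only [labS, dif_neg h] at hω
          have h4 := hc5 g (by simpa using h) ω hω
          refine ⟨h4.1, ?_⟩
          rw [Sum.elim_inl, h4.2]
          simp [sccS, dif_neg h, List.map_map, Function.comp_def]
    have main : ∀ x : (HG T G m hm).N,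
        (Quot.lift (sigS T G m) (sigS_rel T G m hm) x).isSome →
        σ₁' (hfun x) = Quot.lift (sigS T G m) (sigS_rel T G m hm) x := by
      refine Quot.ind ?_
      intro y hy
      cases y with
      | inr r =>
        have hy' : (sigR T G m r).isSome := hy
        obtain ⟨q, hq⟩ := Option.isSome_iff_exists.mp hy'
        show σ₁' (d'.toFun r) = sigS T G m (Sum.inr r)
        show σ₁' (d'.toFun r) = sigR T G m r
        rw [hq]
        exact corekeyS r q hq
      | inl g =>
        by_cases h : ∃ p, m.toFun p = g
        · have hy' : (sigR T G m (T.τ h.choose)).isSome := by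
            have : (sigS T G m (Sum.inl g)).isSome := hy
            simpa [sigS, dif_pos h] using this
          obtain ⟨q, hq⟩ := Option.isSome_iff_exists.mp hy'
          show σ₁' (τ₁' g) = sigS T G m (Sum.inl g)
          rw [hchoose g h]
          simp only [sigS, dif_pos h]
          rw [hq]
          exact corekeyS _ q hq
        · have hy' : (sigS T G m (Sum.inl g)).isSome := hy
          simp [sigS, dif_neg h] at hy'
    refine ⟨⟨hfun, ?_, ?_⟩, ⟨?_, ?_, ?_, ?_⟩, ?_⟩
    · -- Hom: labels
      refine Quot.ind ?_
      intro y ω hω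
      exact (hlab y ω hω).1
    · -- Hom: successors
      refine Quot.ind ?_
      intro y ω hω
      show H'.succ (Sum.elim τ₁' d'.toFun y) =
        ((sccS T G m y).map (Quot.mk (rel0 T G m))).map hfun
      rw [(hlab y ω hω).2, List.map_map]
      rfl
    · funext g; rfl
    · funext r; rfl
    · intro x hx
      rw [main x hx]
      exact hx
    · exact main
    · -- uniqueness
      rintro h' ⟨e1, e2, -, -⟩
      apply homExt
      funext x
      induction x using Quot.ind with
      | _ y =>
        cases y with
        | inl g => exact congrFun e1 g
        | inr r => exact congrFun e2 r
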